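/- Let g ≥ 1. Let a ∈ ℂ[λ] satisfy the reality condition λ^{2g}·conj(a(1/conj(λ))) = a(λ), and let b_1, b_2 ∈ ℂ[λ] be coprime polynomials of degree exactly g+1, each satisfying the reality condition λ^{g+1}·conj(b_i(1/conj(λ))) = b_i(λ). Suppose c_1, c_2 ∈ ℂ[λ] satisfy c_1·b_2 − c_2·b_1 = a with deg c_1 ≤ g−1 and deg c_2 ≤ g. Then both c_1 and c_2 have degree at most g−1 and satisfy the reality condition λ^{g−1}·conj(c_j(1/conj(λ))) = c_j(λ) for all λ ∈ ℂ∖{0}. -/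

import Mathlib

open Polynomial

private lemma eval_reflect_aux {N : ℕ} (p : Polynomial ℂ) (hp : p.natDegree ≤ N)
    (l : ℂ) (hl : l ≠ 0) : (reflect N p).eval l = l ^ N * p.eval l⁻¹ := by
  have : Invertible (l⁻¹) := invertibleOfNonzero (inv_ne_zero hl)
  have h := eval₂_reflect_mul_pow (RingHom.id ℂ) (l⁻¹) N p hp
  simp only [invOf_eq_inv, inv_inv] at h
  have h' : (reflect N p).eval l * l⁻¹ ^ N = p.eval l⁻¹ := h
  rw [← h']
  field_simp
  rw [one_div, inv_pow, mul_assoc, mul_inv_cancel₀ (pow_ne_zero N hl), mul_one]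

private lemma degree_reflect_le {N : ℕ} (p : Polynomial ℂ) (hp : p.natDegree ≤ N) :
    (reflect N p).degree ≤ (N : WithBot ℕ) := by
  refine degree_le_iff_coeff_zero _ _ |>.2 fun m hm => ?_
  rw [coeff_reflect]
  rcases lt_or_ge N m with h | h
  · rw [revAt_eq_self_of_lt h]
    exact coeff_eq_zero_of_natDegree_lt (lt_of_le_of_lt hp (by exact_mod_cast hm))
  · exact absurd hm (not_lt.2 (by exact_mod_cast h))

theorem stmt8 (g : ℕ) (hg : 1 ≤ g) (a b₁ b₂ c₁ c₂ : Polynomial ℂ)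
    (hareal : ∀ l : ℂ, l ≠ 0 →
      l ^ (2 * g) * (starRingEnd ℂ) (a.eval (((starRingEnd ℂ) l)⁻¹)) = a.eval l)
    (hdeg1 : b₁.degree = (g + 1 : ℕ)) (hdeg2 : b₂.degree = (g + 1 : ℕ))
    (hcop : ∀ μ : ℂ, ¬ (b₁.eval μ = 0 ∧ b₂.eval μ = 0))
    (hreal1 : ∀ l : ℂ, l ≠ 0 →
      l ^ (g + 1) * (starRingEnd ℂ) (b₁.eval (((starRingEnd ℂ) l)⁻¹)) = b₁.eval l)
    (hreal2 : ∀ l : ℂ, l ≠ 0 →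
      l ^ (g + 1) * (starRingEnd ℂ) (b₂.eval (((starRingEnd ℂ) l)⁻¹)) = b₂.eval l)
    (heq : c₁ * b₂ - c₂ * b₁ = a)
    (hc1 : c₁.degree ≤ ((g - 1 : ℕ) : ℕ)) (hc2 : c₂.degree ≤ (g : ℕ)) :
    c₁.degree ≤ ((g - 1 : ℕ) : ℕ) ∧ c₂.degree ≤ ((g - 1 : ℕ) : ℕ) ∧
    (∀ l : ℂ, l ≠ 0 →
      l ^ (g - 1) * (starRingEnd ℂ) (c₁.eval (((starRingEnd ℂ) l)⁻¹)) = c₁.eval l) ∧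
    (∀ l : ℂ, l ≠ 0 →
      l ^ (g - 1) * (starRingEnd ℂ) (c₂.eval (((starRingEnd ℂ) l)⁻¹)) = c₂.eval l) := by
  classical
  set σ := starRingEnd ℂ with hσ
  set C₁ : Polynomial ℂ := c₁.map σ with hC₁
  set C₂ : Polynomial ℂ := c₂.map σ with hC₂
  have hinj : Function.Injective σ := (starRingEnd ℂ).injective
  have hndc1 : C₁.natDegree ≤ g - 1 := by
    rw [hC₁, natDegree_map_eq_of_injective hinj]
    exact natDegree_le_iff_degree_le.2 hc1
  have hndc2 : C₂.natDegree ≤ g := by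
    rw [hC₂, natDegree_map_eq_of_injective hinj]
    exact natDegree_le_iff_degree_le.2 hc2
  set q₁ : Polynomial ℂ := reflect (g - 1) C₁ with hq₁
  set q₂ : Polynomial ℂ := reflect g C₂ with hq₂
  -- conj of eval
  have hconj : ∀ (p : Polynomial ℂ) (x : ℂ), σ (p.eval x) = (p.map σ).eval (σ x) := by
    intro p x
    rw [eval_map, eval₂_at_apply]
  have hconjinv : ∀ l : ℂ, σ ((σ l)⁻¹) = l⁻¹ := by
    intro l; rw [map_inv₀]; simp
  -- evaluation formulas for q₁, q₂
  have hq1ev : ∀ l : ℂ, l ≠ 0 → q₁.eval l = l ^ (g - 1) * σ (c₁.eval ((σ l)⁻¹)) := by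
    intro l hl
    rw [hq₁, eval_reflect_aux C₁ hndc1 l hl, hconj, hconjinv]
  have hq2ev : ∀ l : ℂ, l ≠ 0 → q₂.eval l = l ^ g * σ (c₂.eval ((σ l)⁻¹)) := by
    intro l hl
    rw [hq₂, eval_reflect_aux C₂ hndc2 l hl, hconj, hconjinv]
  -- key polynomial identity : X * a = X * q₁ * b₂ - q₂ * b₁
  obtain ⟨k, rfl⟩ : ∃ k, g = k + 1 := ⟨g - 1, by omega⟩
  have hk1 : k + 1 - 1 = k := by omega
  have hkey : X * a = X * q₁ * b₂ - q₂ * b₁ := by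
    apply eq_of_infinite_eval_eq
    refine Set.Infinite.mono (fun l hl' => ?_) ((Set.finite_singleton (0:ℂ)).infinite_compl)
    have hl : l ≠ 0 := hl'
    have ha := hareal l hl
    have hb1 := hreal1 l hl
    have hb2 := hreal2 l hl
    have hm : (σ l)⁻¹ ≠ 0 := inv_ne_zero (by simpa [hσ] using hl)
    have heqm := congrArg (Polynomial.eval ((σ l)⁻¹)) heq
    simp only [eval_sub, eval_mul] at heqm
    have heqc := congrArg σ heqm
    simp only [map_sub, map_mul] at heqc
    simp only [Set.mem_setOf_eq, eval_mul, eval_sub, eval_X]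
    rw [hq1ev l hl, hq2ev l hl, ← ha, ← heqc, ← hb1, ← hb2, hk1]
    ring
  have hkey2 : X * (c₁ - q₁) * b₂ = (X * c₂ - q₂) * b₁ := by
    linear_combination X * heq + hkey
  have hb1ne : b₁ ≠ 0 := fun h => by
    have hb := degree_eq_bot.mpr h
    rw [hdeg1] at hb
    simp at hb
  have hcoprime : IsCoprime b₁ b₂ := by
    refine EuclideanDomain.isCoprime_of_dvd (fun h => hb1ne h.1) ?_
    rintro z hz hz0 ⟨u, rfl⟩ ⟨v, rfl⟩
    have hdz : 0 < z.degree := by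
      by_contra hle
      push_neg at hle
      have hzc := eq_C_of_degree_le_zero hle
      have hc0 : z.coeff 0 ≠ 0 := fun h0 => hz0 (by rw [hzc, h0, map_zero])
      exact (mem_nonunits_iff.mp hz) (hzc ▸ isUnit_C.mpr hc0.isUnit)
    obtain ⟨μ, hμ⟩ := Complex.exists_root hdz
    have hzr : z.eval μ = 0 := hμ
    exact hcop μ ⟨by simp [eval_mul, hzr], by simp [eval_mul, hzr]⟩
  -- degree bounds for q₁ q₂
  have hdq1 : q₁.degree ≤ (k : WithBot ℕ) := by
    have := degree_reflect_le C₁ hndc1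
    rwa [hk1] at this
  have hdq2 : q₂.degree ≤ ((k + 1 : ℕ) : WithBot ℕ) := degree_reflect_le C₂ hndc2
  -- b₁ divides X * (c₁ - q₁), which has small degree, so it is zero
  have hdvd : b₁ ∣ X * (c₁ - q₁) :=
    hcoprime.dvd_of_dvd_mul_right ⟨X * c₂ - q₂, by linear_combination hkey2⟩
  have hzero : X * (c₁ - q₁) = 0 := by
    refine Polynomial.eq_zero_of_dvd_of_degree_lt hdvd ?_
    refine lt_of_le_of_lt (degree_mul_le _ _) ?_
    rw [hdeg1, degree_X]
    calc 1 + (c₁ - q₁).degree ≤ 1 + (k : WithBot ℕ) := by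
          refine add_le_add le_rfl ?_
          exact le_trans (degree_sub_le _ _) (max_le (by rwa [hk1] at hc1) hdq1)
      _ < ((k + 1 + 1 : ℕ) : WithBot ℕ) := by
          rw [show ((1 : WithBot ℕ) + (k : WithBot ℕ)) = ((1 + k : ℕ) : WithBot ℕ) by push_cast; ring]
          exact_mod_cast by omega
  have hec1 : c₁ = q₁ := by
    rcases mul_eq_zero.mp hzero with h | h
    · exact absurd h X_ne_zero
    · exact sub_eq_zero.mp h
  have hXc2 : X * c₂ = q₂ := by
    have : (X * c₂ - q₂) * b₁ = 0 := by rw [← hkey2, hec1]; ring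
    rcases mul_eq_zero.mp this with h | h
    · exact sub_eq_zero.mp h
    · exact absurd h hb1ne
  have hdegc2 : c₂.degree ≤ ((k + 1 - 1 : ℕ) : WithBot ℕ) := by
    rcases eq_or_ne c₂ 0 with h | h
    · simp [h]
    · have h1 : (X * c₂).degree = 1 + c₂.degree := by
        rw [degree_mul, degree_X]
      have h2 : (1 : WithBot ℕ) + c₂.degree ≤ ((k + 1 : ℕ) : WithBot ℕ) := by
        rw [← h1, hXc2]; exact hdq2
      rw [degree_eq_natDegree h] at h2 ⊢
      have : (1 + c₂.natDegree : ℕ) ≤ (k + 1 : ℕ) := by exact_mod_cast h2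
      exact_mod_cast by omega
  refine ⟨hc1, hdegc2, ?_, ?_⟩
  · intro l hl
    rw [← hq1ev l hl, hec1]
  · intro l hl
    have h := congrArg (Polynomial.eval l) hXc2
    simp only [eval_mul, eval_X] at h
    rw [hq2ev l hl] at h
    have hc : l * c₂.eval l = l * (l ^ (k + 1 - 1) * σ (c₂.eval ((σ l)⁻¹))) := by
      rw [h, hk1, pow_succ]; ring
    exact (mul_left_cancel₀ hl hc).symm
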